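/- Let p be a prime and m, n positive integers with m dividing n and m < n, and regard F_{p^m} as a subfield of F_{p^n}. Let c ∈ F_{p^m}, and let G : F_{p^n} → F_{p^n} be PcN with respect to c. Then F : F_{p^n} → F_{p^m} defined by F(x) = Tr_{F_{p^n}/F_{p^m}}(G(x)) is c-differential bent₁. -/

import Mathlib

open Finset

noncomputable section

/-- Finite fields `GaloisField p n` are finite; fix a `Fintype` instance. -/
noncomputable instance (p n : ℕ) [Fact p.Prime] : Fintype (GaloisField p n) :=
  Fintype.ofFinite _

/-- `ζ_q = exp(2πi/q)`. -/
noncomputable def zetaC (q : ℕ) : ℂ := Complex.exp (2 * Real.pi * Complex.I / q)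

/-- `ζ_p^t` for `t ∈ F_p`, computed via the integer lift of `t`. -/
noncomputable def eChar (p : ℕ) (t : ZMod p) : ℂ := zetaC p ^ t.val

/-- The absolute trace `Tr_k : F_{p^k} → F_p`. -/
noncomputable def trAbs (p k : ℕ) [Fact p.Prime] (x : GaloisField p k) : ZMod p :=
  Algebra.trace (ZMod p) (GaloisField p k) x

/-- The Walsh transform `W_F(a,b) = ∑_x ζ_p^{Tr_m(b·F(x)) − Tr_n(a·x)}`. -/
noncomputable def Walsh (p n m : ℕ) [Fact p.Prime] (F : GaloisField p n → GaloisField p m)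
    (a : GaloisField p n) (b : GaloisField p m) : ℂ :=
  ∑ x : GaloisField p n, eChar p (trAbs p m (b * F x) - trAbs p n (a * x))

/-- The `c`-crosscorrelation `cC_{F,G}(u,b) = ∑_z ζ_p^{Tr_m(b(F(z+u) − c·G(z)))}`. -/
noncomputable def crossCorr (p n m : ℕ) [Fact p.Prime]
    (F G : GaloisField p n → GaloisField p m) (c : GaloisField p m)
    (u : GaloisField p n) (b : GaloisField p m) : ℂ :=
  ∑ x : GaloisField p n, eChar p (trAbs p m (b * (F (x + u) - c * G x)))

/-- The `c`-autocorrelation `cC_F = cC_{F,F}`. -/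
noncomputable def autoCorr (p n m : ℕ) [Fact p.Prime]
    (F : GaloisField p n → GaloisField p m) (c : GaloisField p m)
    (u : GaloisField p n) (b : GaloisField p m) : ℂ :=
  crossCorr p n m F F c u b

/-- `F` is perfect₁ `c`-nonlinear: `cC_F(u,b) = 0` for all `u ≠ 0`, `b ≠ 0`. -/
def PerfectCNonlinear1 (p n m : ℕ) [Fact p.Prime]
    (F : GaloisField p n → GaloisField p m) (c : GaloisField p m) : Prop :=
  ∀ u : GaloisField p n, u ≠ 0 → ∀ b : GaloisField p m, b ≠ 0 →
    autoCorr p n m F c u b = 0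

/-- `F` is strictly perfect₁ `c`-nonlinear: `cC_F(u,b) = 0` for all `u`, all `b ≠ 0`. -/
def StrictlyPerfectCNonlinear1 (p n m : ℕ) [Fact p.Prime]
    (F : GaloisField p n → GaloisField p m) (c : GaloisField p m) : Prop :=
  ∀ u : GaloisField p n, ∀ b : GaloisField p m, b ≠ 0 →
    autoCorr p n m F c u b = 0

/-- `F` is `c`-differential bent₁:
`W_F(x,b)·conj(W_F(x,bc)) = cC_F(0,b)` for all `x` and all `b ≠ 0`. -/
def CDifferentialBent1 (p n m : ℕ) [Fact p.Prime]
    (F : GaloisField p n → GaloisField p m) (c : GaloisField p m) : Prop :=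
  ∀ x : GaloisField p n, ∀ b : GaloisField p m, b ≠ 0 →
    Walsh p n m F x b * (starRingEnd ℂ) (Walsh p n m F x (b * c)) =
      autoCorr p n m F c 0 b

/-- `G : F_{p^n} → F_{p^n}` is PcN with respect to `c`: for every `a`
(with `a ≠ 0` required only when `c = 1`), `x ↦ G(x+a) − c·G(x)` is a bijection. -/
def IsPcN (p n : ℕ) [Fact p.Prime] (G : GaloisField p n → GaloisField p n)
    (c : GaloisField p n) : Prop :=
  ∀ a : GaloisField p n, (c = 1 → a ≠ 0) →
    Function.Bijective fun x => G (x + a) - c * G x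


section Aux

variable (p : ℕ) [Fact p.Prime]

lemma zetaC_prim : IsPrimitiveRoot (zetaC p) p :=
  Complex.isPrimitiveRoot_exp p (Fact.out (p := p.Prime)).ne_zero

lemma zetaC_pow_mod (a : ℕ) : zetaC p ^ (a % p) = zetaC p ^ a := by
  conv_rhs => rw [← Nat.div_add_mod a p]
  rw [pow_add, pow_mul, (zetaC_prim p).pow_eq_one, one_pow, one_mul]

lemma eChar_zero : eChar p 0 = 1 := by simp [eChar]

lemma eChar_add (s t : ZMod p) : eChar p (s + t) = eChar p s * eChar p t := by
  rw [eChar, eChar, eChar, ← pow_add, ZMod.val_add, zetaC_pow_mod]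

lemma eChar_ne_zero (t : ZMod p) : eChar p t ≠ 0 :=
  pow_ne_zero _ (Complex.exp_ne_zero _)

lemma eChar_neg (t : ZMod p) : eChar p (-t) = (eChar p t)⁻¹ := by
  refine eq_inv_of_mul_eq_one_left ?_
  rw [← eChar_add]
  simp [eChar_zero]

lemma conj_zetaC : (starRingEnd ℂ) (zetaC p) = (zetaC p)⁻¹ := by
  rw [zetaC, ← Complex.exp_conj, ← Complex.exp_neg]
  congr 1
  simp only [map_div₀, map_mul, Complex.conj_I, Complex.conj_ofReal, map_ofNat,
    Complex.conj_natCast]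
  ring

lemma conj_eChar (t : ZMod p) : (starRingEnd ℂ) (eChar p t) = eChar p (-t) := by
  rw [eChar_neg]
  unfold eChar
  rw [map_pow, conj_zetaC, inv_pow]

lemma eChar_mul_conj (s t : ZMod p) :
    eChar p s * (starRingEnd ℂ) (eChar p t) = eChar p (s - t) := by
  rw [conj_eChar, ← eChar_add, sub_eq_add_neg]

lemma eChar_ne_one {t : ZMod p} (ht : t ≠ 0) : eChar p t ≠ 1 := by
  intro h
  rw [eChar, (zetaC_prim p).pow_eq_one_iff_dvd] at h
  exact ht ((ZMod.val_eq_zero t).mp (Nat.eq_zero_of_dvd_of_lt h (ZMod.val_lt t)))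

lemma trace_add (k : ℕ) (x y : GaloisField p k) :
    trAbs p k (x + y) = trAbs p k x + trAbs p k y := by
  simp [trAbs, map_add]

lemma trace_sub (k : ℕ) (x y : GaloisField p k) :
    trAbs p k (x - y) = trAbs p k x - trAbs p k y := by
  simp [trAbs, map_sub]

lemma sum_eChar_eq_zero (k : ℕ) (w : GaloisField p k) (hw : w ≠ 0) :
    ∑ y : GaloisField p k, eChar p (trAbs p k (w * y)) = 0 := by
  obtain ⟨y₀, h₀⟩ : ∃ y₀, trAbs p k (w * y₀) ≠ 0 := by
    by_contra hf
    push_neg at hf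
    refine hw ((traceForm_nondegenerate (ZMod p) (GaloisField p k)).1 w fun y => ?_)
    simpa [Algebra.traceForm_apply, trAbs] using hf y
  set S := ∑ y : GaloisField p k, eChar p (trAbs p k (w * y)) with hS
  have key : eChar p (trAbs p k (w * y₀)) * S = S := by
    rw [hS, Finset.mul_sum]
    refine Fintype.sum_equiv (Equiv.addLeft y₀) _ _ fun y => ?_
    rw [← eChar_add]
    congr 1
    simp [Equiv.coe_addLeft, mul_add, trace_add]
  have hz : (eChar p (trAbs p k (w * y₀)) - 1) * S = 0 := by
    rw [sub_mul, one_mul, key, sub_self]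
  rcases mul_eq_zero.mp hz with h | h
  · exact absurd (by rwa [sub_eq_zero] at h) (eChar_ne_one p h₀)
  · exact h

lemma trace_formula (k : ℕ) (hk : k ≠ 0) (x : GaloisField p k) :
    algebraMap (ZMod p) (GaloisField p k) (trAbs p k x) =
      ∑ i ∈ Finset.range k, x ^ p ^ i := by
  have hcard : Fintype.card (GaloisField p k) = p ^ k := by
    rw [← Nat.card_eq_fintype_card, GaloisField.card p k hk]
  -- Frobenius as an algebra equivalence
  let frobA : GaloisField p k ≃ₐ[ZMod p] GaloisField p k :=
    AlgEquiv.ofRingEquiv (f := frobeniusEquiv (GaloisField p k) p)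
      (fun z => by
        rw [frobeniusEquiv_apply, frobenius_def, ← map_pow, ZMod.pow_card])
  have hpow : ∀ (i : ℕ) (y : GaloisField p k), (frobA ^ i) y = y ^ p ^ i := by
    intro i
    induction i with
    | zero => intro y; simp
    | succ i ih =>
      intro y
      rw [pow_succ', AlgEquiv.mul_apply, ih]
      show (y ^ p ^ i) ^ p = _
      rw [← pow_mul, ← pow_succ]
  have h1 : frobA ^ k = 1 := by
    refine AlgEquiv.ext fun y => ?_
    rw [hpow, ← hcard, FiniteField.pow_card]
    rfl
  have h2 : ∀ d, 0 < d → frobA ^ d = 1 → k ≤ d := by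
    intro d hd he
    obtain ⟨g, hg⟩ := IsCyclic.exists_generator (α := (GaloisField p k)ˣ)
    have hog : orderOf g = p ^ k - 1 := by
      rw [orderOf_eq_card_of_forall_mem_zpowers hg, Nat.card_units, GaloisField.card p k hk]
    have hgd : g ^ (p ^ d - 1) = 1 := by
      have hx : (g : GaloisField p k) ^ p ^ d = (g : GaloisField p k) := by
        have := congrArg (fun σ => σ (g : GaloisField p k)) he
        simpa [hpow] using this
      have hu : g ^ p ^ d = g := Units.ext (by simpa using hx)
      have h1le : 1 ≤ p ^ d := Nat.one_le_pow _ _ (Fact.out (p := p.Prime)).pos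
      have : g ^ (p ^ d - 1) * g = g := by
        rw [← pow_succ, Nat.sub_add_cancel h1le, hu]
      calc g ^ (p ^ d - 1) = g ^ (p ^ d - 1) * g * g⁻¹ := by group
        _ = 1 := by rw [this, mul_inv_cancel]
    have hdvd : p ^ k - 1 ∣ p ^ d - 1 := hog ▸ orderOf_dvd_of_pow_eq_one hgd
    have hp1 : 1 < p := (Fact.out (p := p.Prime)).one_lt
    have hpd1 : 0 < p ^ d - 1 := by
      have : 1 < p ^ d := Nat.one_lt_pow hd.ne' hp1
      omega
    have hle : p ^ k - 1 ≤ p ^ d - 1 := Nat.le_of_dvd hpd1 hdvd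
    have : p ^ k ≤ p ^ d := by
      have h1k : 1 ≤ p ^ k := Nat.one_le_pow _ _ (Fact.out (p := p.Prime)).pos
      omega
    exact (Nat.pow_le_pow_iff_right hp1).mp this
  have horder : orderOf frobA = k := by
    have hdvd : orderOf frobA ∣ k := orderOf_dvd_of_pow_eq_one h1
    have hpos : 0 < orderOf frobA := by
      exact orderOf_pos_iff.mpr
        (isOfFinOrder_iff_pow_eq_one.mpr ⟨k, Nat.pos_of_ne_zero hk, h1⟩)
    have hge : k ≤ orderOf frobA := h2 _ hpos (pow_orderOf_eq_one frobA)
    exact le_antisymm (Nat.le_of_dvd (Nat.pos_of_ne_zero hk) hdvd) hge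
  have hcardaut :
      Fintype.card (GaloisField p k ≃ₐ[ZMod p] GaloisField p k) = k := by
    rw [← Nat.card_eq_fintype_card, IsGalois.card_aut_eq_finrank, GaloisField.finrank p hk]
  -- the map i ↦ frobA ^ i from Fin k is bijective
  have hbij : Function.Bijective
      (fun i : Fin k => frobA ^ (i : ℕ)) := by
    rw [Fintype.bijective_iff_injective_and_card, Fintype.card_fin, hcardaut]
    refine ⟨fun i j hij => ?_, rfl⟩
    have : (i : ℕ) = (j : ℕ) := by
      refine pow_injOn_Iio_orderOf ?_ ?_ hij
      · simpa [horder] using i.2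
      · simpa [horder] using j.2
    exact Fin.ext this
  rw [trAbs, trace_eq_sum_automorphisms]
  rw [← Fintype.sum_bijective _ hbij _ _ (fun i => rfl)]
  rw [← Fin.sum_univ_eq_sum_range (fun i => x ^ p ^ i) k]
  exact Finset.sum_congr rfl fun i _ => hpow i x

lemma trace_tower (m n : ℕ) (hm : m ≠ 0) (hn : n ≠ 0) (hmn : m ∣ n)
    (ι : GaloisField p m →+* GaloisField p n) (z : GaloisField p n) (d : GaloisField p m)
    (hd : ι d = ∑ i ∈ Finset.range (n / m), z ^ p ^ (m * i)) :
    trAbs p m d = trAbs p n z := by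
  have hnm : m * (n / m) = n := Nat.mul_div_cancel' hmn
  have hmpos : 0 < m := Nat.pos_of_ne_zero hm
  apply (algebraMap (ZMod p) (GaloisField p n)).injective
  rw [trace_formula p n hn]
  have hcomp : ι.comp (algebraMap (ZMod p) (GaloisField p m)) =
      algebraMap (ZMod p) (GaloisField p n) := RingHom.ext_zmod _ _
  have hι : algebraMap (ZMod p) (GaloisField p n) (trAbs p m d) =
      ι (algebraMap (ZMod p) (GaloisField p m) (trAbs p m d)) := by rw [← hcomp]; rfl
  rw [hι, trace_formula p m hm, map_sum]
  have step : ∀ r, ι (d ^ p ^ r) = ∑ q ∈ Finset.range (n / m), z ^ p ^ (m * q + r) := by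
    intro r
    rw [map_pow, hd, ← iterateFrobenius_def (R := GaloisField p n) (p := p) r, map_sum]
    refine Finset.sum_congr rfl fun q _ => ?_
    rw [iterateFrobenius_def, ← pow_mul, ← pow_add]
  simp_rw [step]
  rw [← Finset.sum_product']
  refine Finset.sum_nbij' (fun rq => m * rq.2 + rq.1) (fun i => (i % m, i / m))
    ?_ ?_ ?_ ?_ ?_
  · rintro ⟨r, q⟩ hrq
    simp only [Finset.mem_product, Finset.mem_range] at hrq
    simp only [Finset.mem_range]
    have h1 : q + 1 ≤ n / m := hrq.2
    have h2 : m * (q + 1) ≤ m * (n / m) := Nat.mul_le_mul_left m h1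
    have h3 : m * q + r < m * (q + 1) := by
      rw [Nat.mul_succ]; exact Nat.add_lt_add_left hrq.1 _
    omega
  · intro i hi
    simp only [Finset.mem_range] at hi
    simp only [Finset.mem_product, Finset.mem_range]
    exact ⟨Nat.mod_lt _ hmpos, Nat.div_lt_div_of_lt_of_dvd hmn hi⟩
  · rintro ⟨r, q⟩ hrq
    simp only [Finset.mem_product, Finset.mem_range] at hrq
    have h1 : (m * q + r) % m = r := by
      rw [Nat.mul_add_mod, Nat.mod_eq_of_lt hrq.1]
    have h2 : (m * q + r) / m = q := by
      rw [Nat.mul_add_div hmpos, Nat.div_eq_of_lt hrq.1, add_zero]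
    simp [h1, h2]
  · intro i _
    exact Nat.div_add_mod i m
  · rintro ⟨r, q⟩ _
    rfl

end Aux

theorem statement_10 (p n m : ℕ) [Fact p.Prime] (hm : 0 < m) (hmn : m ∣ n) (hlt : m < n)
    (ι : GaloisField p m →+* GaloisField p n) (c : GaloisField p m)
    (G : GaloisField p n → GaloisField p n) (hG : IsPcN p n G (ι c))
    (F : GaloisField p n → GaloisField p m)
    (hF : ∀ x, ι (F x) = ∑ i ∈ Finset.range (n / m), G x ^ p ^ (m * i)) :
    CDifferentialBent1 p n m F c := by
  intro a b hb
  have hm0 : m ≠ 0 := hm.ne'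
  have hn0 : n ≠ 0 := by omega
  have hcardm : Fintype.card (GaloisField p m) = p ^ m := by
    rw [← Nat.card_eq_fintype_card, GaloisField.card p m hm0]
  have hfix : ∀ (e : GaloisField p m) (i : ℕ), ι e ^ p ^ (m * i) = ι e := by
    intro e i
    rw [pow_mul, ← map_pow]
    congr 1
    rw [← hcardm]
    exact FiniteField.pow_card_pow i e
  have hkey : ∀ x u : GaloisField p n,
      trAbs p m (b * (F (x + u) - c * F x)) =
        trAbs p n (ι b * (G (x + u) - ι c * G x)) := by
    intro x u
    refine trace_tower p m n hm0 hn0 hmn ι _ _ ?_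
    simp only [mul_pow, sub_pow_char_pow, hfix]
    rw [map_mul, map_sub, map_mul, hF, hF, Finset.mul_sum, ← Finset.sum_sub_distrib,
      Finset.mul_sum]
  have hbne : ι b ≠ 0 := fun h => hb (ι.injective (by rw [h, map_zero]))
  have hauto : ∀ u : GaloisField p n, u ≠ 0 → autoCorr p n m F c u b = 0 := by
    intro u hu
    have hbij := hG u (fun _ => hu)
    calc autoCorr p n m F c u b
        = ∑ x : GaloisField p n,
            eChar p (trAbs p n (ι b * (G (x + u) - ι c * G x))) := by
          unfold autoCorr crossCorr
          exact Finset.sum_congr rfl fun x _ => by rw [hkey]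
      _ = ∑ w : GaloisField p n, eChar p (trAbs p n (ι b * w)) :=
          Fintype.sum_bijective _ hbij _ _ (fun x => rfl)
      _ = 0 := sum_eChar_eq_zero p n (ι b) hbne
  have expand : Walsh p n m F a b * (starRingEnd ℂ) (Walsh p n m F a (b * c)) =
      ∑ u : GaloisField p n,
        autoCorr p n m F c u b * eChar p (- trAbs p n (a * u)) := by
    unfold Walsh
    calc (∑ x : GaloisField p n,
            eChar p (trAbs p m (b * F x) - trAbs p n (a * x))) *
          (starRingEnd ℂ) (∑ y : GaloisField p n,
            eChar p (trAbs p m (b * c * F y) - trAbs p n (a * y)))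
        = ∑ y : GaloisField p n, ∑ x : GaloisField p n,
            eChar p ((trAbs p m (b * F x) - trAbs p n (a * x)) -
              (trAbs p m (b * c * F y) - trAbs p n (a * y))) := by
          rw [map_sum, Finset.sum_mul_sum, Finset.sum_comm]
          exact Finset.sum_congr rfl fun y _ =>
            Finset.sum_congr rfl fun x _ => eChar_mul_conj p _ _
      _ = ∑ y : GaloisField p n, ∑ u : GaloisField p n,
            eChar p (trAbs p m (b * (F (y + u) - c * F y)) - trAbs p n (a * u)) := by
          refine Finset.sum_congr rfl fun y _ => ?_
          rw [← Equiv.sum_comp (Equiv.addLeft y)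
            (fun x => eChar p ((trAbs p m (b * F x) - trAbs p n (a * x)) -
              (trAbs p m (b * c * F y) - trAbs p n (a * y))))]
          refine Finset.sum_congr rfl fun u _ => ?_
          simp only [Equiv.coe_addLeft]
          congr 1
          rw [mul_sub, trace_sub, mul_add a y u, trace_add, ← mul_assoc b c, mul_assoc b c]
          ring
      _ = ∑ u : GaloisField p n,
            autoCorr p n m F c u b * eChar p (- trAbs p n (a * u)) := by
          rw [Finset.sum_comm]
          refine Finset.sum_congr rfl fun u _ => ?_
          unfold autoCorr crossCorr
          rw [Finset.sum_mul]
          refine Finset.sum_congr rfl fun y _ => ?_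
          rw [sub_eq_add_neg, eChar_add]
  rw [expand, Finset.sum_eq_single (0 : GaloisField p n)]
  · simp [trAbs, eChar_zero]
  · intro u _ hu
    rw [hauto u hu, zero_mul]
  · intro h
    exact absurd (Finset.mem_univ 0) h
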